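/- With 2α = 1 and −2β = p = q + 1 (p ≥ 1 natural), the osp(2,2) generators θz∂_z + z∂_θ + 2βθ, θ∂_z + ∂_θ, z∂_θ, ∂_θ, together with ∂_z, z∂_z + ½θ∂_θ + β, z²∂_z + zθ∂_θ + 2βz, all preserve the module span{z^j : 0 ≤ j ≤ p} ⊕ span{z^kθ : 0 ≤ k ≤ q} of pairs (f,g) with deg f ≤ p = q+1 and deg g ≤ q. -/
import Mathlib


open Polynomial

lemma coeff_X_mul_derivative (h : Polynomial ℂ) (k : ℕ) :
    (X * derivative h).coeff k = h.coeff k * k := by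
  cases k with
  | zero => simp [mul_coeff_zero]
  | succ j => rw [coeff_X_mul, coeff_derivative]; push_cast; ring

/-- With `2α = 1` and `−2β = p = q + 1`, the `osp(2,2)` generators
`θz∂_z + z∂_θ + 2βθ`, `θ∂_z + ∂_θ`, `z∂_θ`, `∂_θ`, `∂_z`, `z∂_z + ½θ∂_θ + β`,
`z²∂_z + zθ∂_θ + 2βz` all preserve the module of pairs `(f, g)` (modeling
`f + gθ`) with `deg f ≤ p` and `deg g ≤ q`. -/
theorem stmt14 (p q : ℕ) (β : ℂ) (hpq : p = q + 1) (hβ : 2 * β = -(p : ℂ)) :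
    ∀ f g : Polynomial ℂ,
      f ∈ Polynomial.degreeLE ℂ (p : WithBot ℕ) →
      g ∈ Polynomial.degreeLE ℂ (q : WithBot ℕ) →
      -- Q₁ = θz∂_z + z∂_θ + 2βθ
      (X * g ∈ Polynomial.degreeLE ℂ (p : WithBot ℕ) ∧
        X * derivative f + (2 * β) • f ∈ Polynomial.degreeLE ℂ (q : WithBot ℕ)) ∧
      -- Q₂ = θ∂_z + ∂_θ
      (g ∈ Polynomial.degreeLE ℂ (p : WithBot ℕ) ∧
        derivative f ∈ Polynomial.degreeLE ℂ (q : WithBot ℕ)) ∧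
      -- R₁ = z∂_θ
      (X * g ∈ Polynomial.degreeLE ℂ (p : WithBot ℕ)) ∧
      -- R₂ = ∂_θ
      (g ∈ Polynomial.degreeLE ℂ (p : WithBot ℕ)) ∧
      -- J⁻ = ∂_z
      (derivative f ∈ Polynomial.degreeLE ℂ (p : WithBot ℕ) ∧
        derivative g ∈ Polynomial.degreeLE ℂ (q : WithBot ℕ)) ∧
      -- J⁰ = z∂_z + ½θ∂_θ + β
      (X * derivative f + β • f ∈ Polynomial.degreeLE ℂ (p : WithBot ℕ) ∧
        X * derivative g + ((1 / 2 : ℂ) + β) • g ∈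
          Polynomial.degreeLE ℂ (q : WithBot ℕ)) ∧
      -- J⁺ = z²∂_z + zθ∂_θ + 2βz
      (X ^ 2 * derivative f + (2 * β) • (X * f) ∈ Polynomial.degreeLE ℂ (p : WithBot ℕ) ∧
        X ^ 2 * derivative g + X * g + (2 * β) • (X * g) ∈
          Polynomial.degreeLE ℂ (q : WithBot ℕ)) := by
  intro f g hf hg
  rw [mem_degreeLE, degree_le_iff_coeff_zero] at hf hg
  have hf' : ∀ m : ℕ, p < m → f.coeff m = 0 := fun m hm => hf m (by exact_mod_cast hm)
  have hg' : ∀ m : ℕ, q < m → g.coeff m = 0 := fun m hm => hg m (by exact_mod_cast hm)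
  have key : ∀ n : ℕ, p ≤ n → f.coeff n * ((n : ℂ) + 2 * β) = 0 := by
    intro n hn
    rcases eq_or_lt_of_le hn with h | h
    · subst h; rw [hβ]; ring
    · rw [hf' n h, zero_mul]
  have keyg : ∀ n : ℕ, q ≤ n → g.coeff n * ((n : ℂ) + 1 + 2 * β) = 0 := by
    intro n hn
    rcases eq_or_lt_of_le hn with h | h
    · subst h; rw [hβ, hpq]; push_cast; ring
    · rw [hg' n h, zero_mul]
  have hXg : X * g ∈ Polynomial.degreeLE ℂ (p : WithBot ℕ) := by
    rw [mem_degreeLE, degree_le_iff_coeff_zero]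
    intro m hm
    rw [Nat.cast_lt] at hm
    cases m with
    | zero => omega
    | succ k => rw [coeff_X_mul]; exact hg' k (by omega)
  have hgp : g ∈ Polynomial.degreeLE ℂ (p : WithBot ℕ) := by
    rw [mem_degreeLE, degree_le_iff_coeff_zero]
    intro m hm
    rw [Nat.cast_lt] at hm
    exact hg' m (by omega)
  refine ⟨⟨hXg, ?_⟩, ⟨hgp, ?_⟩, hXg, hgp, ⟨?_, ?_⟩, ⟨?_, ?_⟩, ⟨?_, ?_⟩⟩
  all_goals rw [mem_degreeLE, degree_le_iff_coeff_zero]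
  all_goals intro m hm
  all_goals rw [Nat.cast_lt] at hm
  -- Q₁ second component: X f' + 2β f, bound q
  · rw [coeff_add, coeff_smul, coeff_X_mul_derivative, smul_eq_mul]
    linear_combination key m (by omega)
  -- Q₂ second: derivative f, bound q
  · rw [coeff_derivative, hf' (m + 1) (by omega), zero_mul]
  -- J⁻ first: derivative f, bound p
  · rw [coeff_derivative, hf' (m + 1) (by omega), zero_mul]
  -- J⁻ second: derivative g, bound q
  · rw [coeff_derivative, hg' (m + 1) (by omega), zero_mul]
  -- J⁰ first: X f' + β f, bound p
  · rw [coeff_add, coeff_smul, coeff_X_mul_derivative, smul_eq_mul, hf' m (by omega)]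
    ring
  -- J⁰ second: X g' + (1/2 + β) g, bound q
  · rw [coeff_add, coeff_smul, coeff_X_mul_derivative, smul_eq_mul, hg' m (by omega)]
    ring
  -- J⁺ first: X² f' + 2β X f, bound p
  · cases m with
    | zero => omega
    | succ k =>
      rw [coeff_add, coeff_smul, sq, mul_assoc, coeff_X_mul, coeff_X_mul,
        coeff_X_mul_derivative, smul_eq_mul]
      linear_combination key k (by omega)
  -- J⁺ second: X² g' + X g + 2β X g, bound q
  · cases m with
    | zero => omega
    | succ k =>
      rw [coeff_add, coeff_add, coeff_smul, sq, mul_assoc, coeff_X_mul, coeff_X_mul,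
        coeff_X_mul_derivative, smul_eq_mul]
      linear_combination keyg k (by omega)
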